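/- Let X, Y be Banach spaces, I ⊆ ℝ an interval, U ⊆ X open, and F : I × U → Y continuously differentiable. Suppose the partial derivative D₂F(t, x) : X → Y is a Banach space isomorphism for every (t, x) ∈ I × U. If γ₁, γ₂ : I → U are continuous curves with F(t, γ₁(t)) = 0 = F(t, γ₂(t)) for all t ∈ I and γ₁(t₀) = γ₂(t₀) for some t₀ ∈ I, then γ₁ = γ₂ on I. -/

import Mathlib

open Set Metric


/-- Global uniqueness of implicitly defined curves: if `F : I × U → Y` is `C¹` with invertible
partial derivative `D₂F` everywhere, two continuous solution curves of `F(t, γ(t)) = 0` that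
agree at one point of the interval `I` agree on all of `I`. -/
theorem stmt10 {X Y : Type*}
    [NormedAddCommGroup X] [NormedSpace ℝ X] [CompleteSpace X]
    [NormedAddCommGroup Y] [NormedSpace ℝ Y] [CompleteSpace Y]
    (I : Set ℝ) (hI : I.OrdConnected) (U : Set X) (hU : IsOpen U)
    (F : ℝ × X → Y) (hF : ContDiffOn ℝ 1 F (I ×ˢ U))
    (hinv : ∀ t ∈ I, ∀ x ∈ U, ∃ e : X ≃L[ℝ] Y,
      (e : X →L[ℝ] Y) = fderiv ℝ (fun y => F (t, y)) x)
    (γ₁ γ₂ : ℝ → X) (hγ₁c : ContinuousOn γ₁ I) (hγ₂c : ContinuousOn γ₂ I)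
    (hγ₁U : ∀ t ∈ I, γ₁ t ∈ U) (hγ₂U : ∀ t ∈ I, γ₂ t ∈ U)
    (hγ₁ : ∀ t ∈ I, F (t, γ₁ t) = 0) (hγ₂ : ∀ t ∈ I, F (t, γ₂ t) = 0)
    (t₀ : ℝ) (ht₀ : t₀ ∈ I) (heq : γ₁ t₀ = γ₂ t₀) :
    Set.EqOn γ₁ γ₂ I := by
  classical
  -- trivial cases
  rcases subsingleton_or_nontrivial X with hX | hX
  · intro t _; exact Subsingleton.elim _ _
  by_cases hIs : I.Subsingleton
  · intro t ht; rw [hIs ht ht₀]; exact heq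
  rw [Set.not_subsingleton_iff] at hIs
  obtain ⟨a, ha, b, hb, hab⟩ := hIs
  -- convexity / unique differentiability
  have hIconv : Convex ℝ I := convex_iff_ordConnected.mpr hI
  have hIint : (interior I).Nonempty := by
    rcases hab.lt_or_gt with h | h
    · exact ⟨(a + b) / 2, interior_maximal (Set.Ioo_subset_Icc_self.trans (hI.out ha hb))
        isOpen_Ioo (by constructor <;> linarith)⟩
    · exact ⟨(b + a) / 2, interior_maximal (Set.Ioo_subset_Icc_self.trans (hI.out hb ha))
        isOpen_Ioo (by constructor <;> linarith)⟩
  have hUD : UniqueDiffOn ℝ (I ×ˢ U) :=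
    (uniqueDiffOn_convex hIconv hIint).prod hU.uniqueDiffOn
  -- the partial derivative map
  set D : ℝ × X → (X →L[ℝ] Y) :=
    fun p => (fderivWithin ℝ F (I ×ˢ U) p).comp
      ((0 : X →L[ℝ] ℝ).prod (ContinuousLinearMap.id ℝ X)) with hD
  have hDcont : ContinuousOn D (I ×ˢ U) := by
    apply ContinuousOn.clm_comp (hF.continuousOn_fderivWithin hUD le_rfl) continuousOn_const
  have hDderiv : ∀ t ∈ I, ∀ x ∈ U, HasFDerivAt (fun y => F (t, y)) (D (t, x)) x := by
    intro t ht x hx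
    have h1 : HasFDerivWithinAt F (fderivWithin ℝ F (I ×ˢ U) (t, x)) (I ×ˢ U) (t, x) :=
      ((hF.differentiableOn one_ne_zero) (t, x) ⟨ht, hx⟩).hasFDerivWithinAt
    have h2 : HasFDerivAt (fun y => ((t, y) : ℝ × X))
        ((0 : X →L[ℝ] ℝ).prod (ContinuousLinearMap.id ℝ X)) x :=
      HasFDerivAt.prodMk (hasFDerivAt_const t x) (hasFDerivAt_id x)
    have h3 : HasFDerivWithinAt (fun y => F (t, y)) (D (t, x)) U x :=
      h1.comp x (h2.hasFDerivWithinAt) (fun y hy => ⟨ht, hy⟩)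
    exact h3.hasFDerivAt (hU.mem_nhds hx)
  -- local uniqueness at any common point
  have key : ∀ s ∈ I, γ₁ s = γ₂ s →
      ∃ δ > 0, ∀ t ∈ I, |t - s| < δ → γ₁ t = γ₂ t := by
    intro s hs hss
    set x₀ := γ₁ s with hx₀
    have hx₀U : x₀ ∈ U := hγ₁U s hs
    obtain ⟨e, he⟩ := hinv s hs x₀ hx₀U
    have heD : (e : X →L[ℝ] Y) = D (s, x₀) := by
      rw [he, (hDderiv s hs x₀ hx₀U).fderiv]
    set K := ‖(e.symm : Y →L[ℝ] X)‖ with hK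
    have hKpos : 0 < K := by
      obtain ⟨z, hz⟩ := exists_ne (0 : X)
      have hne : (e.symm : Y →L[ℝ] X) ≠ 0 := by
        intro h0
        apply hz
        have h1 : z = (e.symm : Y →L[ℝ] X) ((e : X →L[ℝ] Y) z) := by simp
        rw [h1, h0]
        simp
      exact norm_pos_iff.mpr hne
    have hlow : ∀ z : X, ‖z‖ ≤ K * ‖(e : X →L[ℝ] Y) z‖ := by
      intro z
      calc ‖z‖ = ‖(e.symm : Y →L[ℝ] X) ((e : X →L[ℝ] Y) z)‖ := by simp
        _ ≤ K * ‖(e : X →L[ℝ] Y) z‖ := (e.symm : Y →L[ℝ] X).le_opNorm _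
    set ε := (2 * K)⁻¹ with hε
    have hεpos : 0 < ε := by positivity
    -- continuity of D at (s, x₀)
    obtain ⟨δ₀, hδ₀pos, hδ₀⟩ := Metric.continuousWithinAt_iff.mp (hDcont (s, x₀) ⟨hs, hx₀U⟩) ε hεpos
    obtain ⟨r, hrpos, hrU⟩ := Metric.isOpen_iff.mp hU x₀ hx₀U
    set ρ := min r δ₀ with hρ
    have hρpos : 0 < ρ := lt_min hrpos hδ₀pos
    have hBU : ball x₀ ρ ⊆ U := (ball_subset_ball (min_le_left _ _)).trans hrU
    have hDbound : ∀ t ∈ I, |t - s| < δ₀ → ∀ x ∈ ball x₀ ρ, ‖D (t, x) - D (s, x₀)‖ ≤ ε := by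
      intro t ht hts x hx
      have : dist (t, x) (s, x₀) < δ₀ := by
        rw [Prod.dist_eq]
        exact max_lt (by simpa [Real.dist_eq] using hts)
          (lt_of_lt_of_le (mem_ball.mp hx) (min_le_right _ _))
      have := hδ₀ ⟨ht, hBU hx⟩ this
      rw [dist_eq_norm] at this
      exact this.le
    -- choose δ from continuity of the curves
    obtain ⟨δ₁, hδ₁pos, hδ₁⟩ := Metric.continuousWithinAt_iff.mp (hγ₁c s hs) ρ hρpos
    obtain ⟨δ₂, hδ₂pos, hδ₂⟩ := Metric.continuousWithinAt_iff.mp (hγ₂c s hs) ρ hρpos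
    refine ⟨min δ₀ (min δ₁ δ₂), by positivity, ?_⟩
    intro t ht hts
    have hts₀ : |t - s| < δ₀ := lt_of_lt_of_le hts (min_le_left _ _)
    have hts₁ : dist t s < δ₁ := by
      rw [Real.dist_eq]
      exact lt_of_lt_of_le hts ((min_le_right _ _).trans (min_le_left _ _))
    have hts₂ : dist t s < δ₂ := by
      rw [Real.dist_eq]
      exact lt_of_lt_of_le hts ((min_le_right _ _).trans (min_le_right _ _))
    have h1B : γ₁ t ∈ ball x₀ ρ := mem_ball.mpr (hδ₁ ht hts₁)
    have h2B : γ₂ t ∈ ball x₀ ρ := by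
      have hd : dist (γ₂ t) x₀ < ρ := by rw [hss]; exact hδ₂ ht hts₂
      exact mem_ball.mpr hd
    -- mean value estimate on the ball
    have hmv : ‖F (t, γ₁ t) - F (t, γ₂ t) - (e : X →L[ℝ] Y) (γ₁ t - γ₂ t)‖
        ≤ ε * ‖γ₁ t - γ₂ t‖ := by
      refine Convex.norm_image_sub_le_of_norm_hasFDerivWithin_le'
        (f := fun y => F (t, y)) (f' := fun x => D (t, x)) (φ := (e : X →L[ℝ] Y)) (C := ε)
        (fun x hx => (hDderiv t ht x (hBU hx)).hasFDerivWithinAt) ?_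
        (convex_ball x₀ ρ) h2B h1B
      intro x hx
      rw [heD]
      exact hDbound t ht hts₀ x hx
    rw [hγ₁ t ht, hγ₂ t ht, sub_zero, zero_sub, norm_neg] at hmv
    have hle : ‖γ₁ t - γ₂ t‖ ≤ K * (ε * ‖γ₁ t - γ₂ t‖) :=
      (hlow _).trans (mul_le_mul_of_nonneg_left hmv hKpos.le)
    have : K * (ε * ‖γ₁ t - γ₂ t‖) = ‖γ₁ t - γ₂ t‖ / 2 := by
      rw [hε, ← mul_assoc, mul_inv, ← mul_assoc, mul_comm K 2⁻¹, mul_assoc 2⁻¹,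
        mul_inv_cancel₀ hKpos.ne', mul_one, inv_mul_eq_div]
    rw [this] at hle
    have : ‖γ₁ t - γ₂ t‖ = 0 := by
      have hnn := norm_nonneg (γ₁ t - γ₂ t)
      linarith
    have := norm_eq_zero.mp this
    exact sub_eq_zero.mp this
  -- clopen argument
  have hIpre : IsPreconnected I := hIconv.isPreconnected
  haveI : PreconnectedSpace I := Subtype.preconnectedSpace hIpre
  set T : Set I := {x | γ₁ ↑x = γ₂ ↑x} with hT
  have hTclosed : IsClosed T :=
    isClosed_eq (hγ₁c.restrict) (hγ₂c.restrict)
  have hTopen : IsOpen T := by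
    rw [isOpen_iff_mem_nhds]
    intro x hx
    obtain ⟨δ, hδpos, hδ⟩ := key x x.2 hx
    rw [mem_nhds_subtype]
    refine ⟨ball (x : ℝ) δ, ball_mem_nhds _ hδpos, ?_⟩
    intro y hy
    exact hδ y y.2 (by rw [← Real.dist_eq]; exact hy)
  have : T = Set.univ := IsClopen.eq_univ (s := T) ⟨hTclosed, hTopen⟩ ⟨⟨t₀, ht₀⟩, heq⟩
  intro t ht
  have : (⟨t, ht⟩ : I) ∈ T := this ▸ Set.mem_univ _
  exact this
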